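/- Let f(t) := Σ_{m=1}^∞ (1/m) sin²(t/2^m) (the Haraux–Souplet function) and let P_k(t) := Σ_{m=1}^k (1/m) sin²(t/2^m) denote its k-th partial sum, which is a continuous periodic function of period 2^{k+1}π. Then for every t ∈ ℝ and k ∈ ℕ, 0 ≤ f(t) − P_k(t) ≤ t² Σ_{m=k+1}^∞ 1/(m·4^m). Consequently, for every ε₀ > 0, sup_{N≥1} N^{−2−ε₀} sup_{|t|≤N} |f(t) − P_k(t)| → 0 as k → ∞; in particular, with the weight 𝔽_{[−N,N]} ≡ N^{−2−ε₀} and the metric of C[−N,N], the periodic functions P_k approximate f on every interval [−N,N]. -/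

import Mathlib

open Real Filter Topology

/-- The Haraux–Souplet function `f(t) = ∑_{m=1}^∞ (1/m) sin²(t/2^m)`. -/
noncomputable def harauxSouplet (t : ℝ) : ℝ :=
  ∑' m : ℕ, (1 / ((m : ℝ) + 1)) * Real.sin (t / 2 ^ (m + 1)) ^ 2

/-- The `k`-th partial sum `P_k(t) = ∑_{m=1}^k (1/m) sin²(t/2^m)`. -/
noncomputable def harauxSoupletPartial (k : ℕ) (t : ℝ) : ℝ :=
  ∑ m ∈ Finset.range k, (1 / ((m : ℝ) + 1)) * Real.sin (t / 2 ^ (m + 1)) ^ 2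

lemma hs_term_nonneg (t : ℝ) (m : ℕ) :
    0 ≤ (1 / ((m : ℝ) + 1)) * Real.sin (t / 2 ^ (m + 1)) ^ 2 :=
  mul_nonneg (by positivity) (sq_nonneg _)

lemma hs_term_le (t : ℝ) (m : ℕ) :
    (1 / ((m : ℝ) + 1)) * Real.sin (t / 2 ^ (m + 1)) ^ 2 ≤
      t ^ 2 * (1 / (((m : ℝ) + 1) * 4 ^ (m + 1))) := by
  have h1 : Real.sin (t / 2 ^ (m + 1)) ^ 2 ≤ (t / 2 ^ (m + 1)) ^ 2 := Real.sin_sq_le_sq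
  have h2 : (t / 2 ^ (m + 1) : ℝ) ^ 2 = t ^ 2 / 4 ^ (m + 1) := by
    rw [div_pow, ← pow_mul, show (m+1)*2 = 2*(m+1) by ring, pow_mul]; norm_num
  calc (1 / ((m : ℝ) + 1)) * Real.sin (t / 2 ^ (m + 1)) ^ 2
      ≤ (1 / ((m : ℝ) + 1)) * (t ^ 2 / 4 ^ (m + 1)) := by
        rw [← h2]; exact mul_le_mul_of_nonneg_left h1 (by positivity)
    _ = t ^ 2 * (1 / (((m : ℝ) + 1) * 4 ^ (m + 1))) := by
        have : ((m : ℝ) + 1) ≠ 0 := by positivity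
        have : (4 : ℝ) ^ (m + 1) ≠ 0 := by positivity
        field_simp

lemma hs_tail_summable (t : ℝ) :
    Summable (fun m : ℕ => t ^ 2 * (1 / (((m : ℝ) + 1) * 4 ^ (m + 1)))) := by
  apply Summable.mul_left
  refine Summable.of_nonneg_of_le (fun m => by positivity) (fun m => ?_)
    (summable_geometric_of_lt_one (r := (1/4:ℝ)) (by norm_num) (by norm_num))
  rw [div_pow, one_pow, div_le_div_iff₀ (by positivity) (by positivity)]
  have h1 : (4 : ℝ) ^ m ≤ ((m : ℝ) + 1) * 4 ^ (m + 1) := by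
    rw [pow_succ]
    nlinarith [pow_pos (by norm_num : (0:ℝ) < 4) m, Nat.cast_nonneg (α := ℝ) m]
  linarith

lemma hs_summable (t : ℝ) :
    Summable (fun m : ℕ => (1 / ((m : ℝ) + 1)) * Real.sin (t / 2 ^ (m + 1)) ^ 2) :=
  Summable.of_nonneg_of_le (hs_term_nonneg t) (hs_term_le t) (hs_tail_summable t)

lemma hs_coef_summable :
    Summable (fun m : ℕ => 1 / (((m : ℝ) + 1) * 4 ^ (m + 1))) := by
  have := (hs_tail_summable 1)
  simpa using this

lemma hs_coef_summable' (k : ℕ) :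
    Summable (fun m : ℕ => 1 / ((((m + k + 1 : ℕ) : ℝ)) * 4 ^ (m + k + 1))) := by
  have h := (summable_nat_add_iff (f := fun m : ℕ => 1 / (((m : ℝ) + 1) * 4 ^ (m + 1))) k).2
    hs_coef_summable
  apply h.congr
  intro m
  push_cast
  ring_nf

lemma hs_tail (t : ℝ) (k : ℕ) :
    harauxSouplet t - harauxSoupletPartial k t =
      ∑' m : ℕ, (1 / (((m + k : ℕ) : ℝ) + 1)) * Real.sin (t / 2 ^ (m + k + 1)) ^ 2 := by
  have h := Summable.sum_add_tsum_nat_add (f := fun m : ℕ =>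
    (1 / ((m : ℝ) + 1)) * Real.sin (t / 2 ^ (m + 1)) ^ 2) k (hs_summable t)
  rw [harauxSouplet, harauxSoupletPartial, sub_eq_iff_eq_add, ← h, add_comm]

lemma hs_tail_nonneg (t : ℝ) (k : ℕ) : 0 ≤ harauxSouplet t - harauxSoupletPartial k t := by
  rw [hs_tail]
  exact tsum_nonneg fun m => mul_nonneg (by positivity) (sq_nonneg _)

lemma hs_tail_le (t : ℝ) (k : ℕ) :
    harauxSouplet t - harauxSoupletPartial k t ≤
      t ^ 2 * ∑' m : ℕ, 1 / ((((m + k + 1 : ℕ) : ℝ)) * 4 ^ (m + k + 1)) := by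
  rw [hs_tail, ← tsum_mul_left]
  apply Summable.tsum_le_tsum _ _ ((hs_coef_summable' k).mul_left _)
  · intro m
    have h := hs_term_le t (m + k)
    convert h using 2 <;> push_cast <;> rfl
  · exact ((summable_nat_add_iff (f := fun m : ℕ =>
      (1 / ((m : ℝ) + 1)) * Real.sin (t / 2 ^ (m + 1)) ^ 2) k).2 (hs_summable t))

lemma hs_coef_tendsto :
    Tendsto (fun k : ℕ => ∑' m : ℕ, 1 / ((((m + k + 1 : ℕ) : ℝ)) * 4 ^ (m + k + 1)))
      atTop (𝓝 0) := by
  have h := tendsto_sum_nat_add (f := fun m : ℕ => 1 / (((m : ℝ) + 1) * 4 ^ (m + 1)))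
  apply h.congr
  intro k
  apply tsum_congr
  intro m
  push_cast
  ring_nf

lemma hs_cont (k : ℕ) : Continuous (harauxSoupletPartial k) := by
  unfold harauxSoupletPartial
  apply continuous_finset_sum
  intro m _
  exact continuous_const.mul ((Real.continuous_sin.comp
    (continuous_id.div_const _)).pow 2)

lemma hs_periodic (k : ℕ) :
    Function.Periodic (harauxSoupletPartial k) (2 ^ (k + 1) * Real.pi) := by
  intro t
  unfold harauxSoupletPartial
  apply Finset.sum_congr rfl
  intro m hm
  rw [Finset.mem_range] at hm
  congr 1
  have harg : (t + 2 ^ (k + 1) * Real.pi) / 2 ^ (m + 1)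
      = t / 2 ^ (m + 1) + ((2 ^ (k - m) : ℕ) : ℝ) * Real.pi := by
    have h2 : ((2:ℝ) ^ (k + 1)) = 2 ^ (m + 1) * 2 ^ (k - m) := by
      rw [← pow_add]; congr 1; omega
    push_cast
    field_simp
    rw [h2]; ring
  rw [harg, Real.sin_add_nat_mul_pi, mul_pow, ← pow_mul,
    show 2 ^ (k - m) * 2 = 2 * 2 ^ (k - m) by ring, pow_mul]
  norm_num

/-- Each `P_k` is continuous and periodic with period `2^{k+1} π`; the tail estimate
`0 ≤ f(t) − P_k(t) ≤ t² ∑_{m=k+1}^∞ 1/(m 4^m)` holds; and, for every `ε₀ > 0`,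
`sup_{N ≥ 1} N^{−2−ε₀} sup_{|t| ≤ N} |f(t) − P_k(t)| → 0` as `k → ∞`: the periodic
functions `P_k` approximate `f` in the Levitan metrical sense with weight
`𝔽_{[−N,N]} ≡ N^{−2−ε₀}` and the metric of `C[−N,N]`. -/
theorem stmt18 :
    (∀ k : ℕ, Continuous (harauxSoupletPartial k) ∧
      Function.Periodic (harauxSoupletPartial k) (2 ^ (k + 1) * Real.pi)) ∧
    (∀ t : ℝ, ∀ k : ℕ, 0 ≤ harauxSouplet t - harauxSoupletPartial k t ∧
      harauxSouplet t - harauxSoupletPartial k t ≤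
        t ^ 2 * ∑' m : ℕ, 1 / ((((m + k + 1 : ℕ) : ℝ)) * 4 ^ (m + k + 1))) ∧
    ∀ ε₀ : ℝ, 0 < ε₀ →
      Tendsto (fun k : ℕ => ⨆ N : Set.Ici (1 : ℝ), (N : ℝ) ^ (-(2 + ε₀)) *
          ⨆ t : Set.Icc (-(N : ℝ)) (N : ℝ), |harauxSouplet t - harauxSoupletPartial k t|)
        atTop (𝓝 0) := by
  refine ⟨fun k => ⟨hs_cont k, hs_periodic k⟩, fun t k => ⟨hs_tail_nonneg t k, hs_tail_le t k⟩,
    fun ε₀ hε₀ => ?_⟩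
  set T : ℕ → ℝ := fun k => ∑' m : ℕ, 1 / ((((m + k + 1 : ℕ) : ℝ)) * 4 ^ (m + k + 1)) with hT
  have hTnn : ∀ k, 0 ≤ T k := fun k => tsum_nonneg fun m => by positivity
  haveI : Nonempty (Set.Ici (1 : ℝ)) := Set.nonempty_Ici.to_subtype
  set S : ℕ → ℝ := fun k => ⨆ N : Set.Ici (1 : ℝ), (N : ℝ) ^ (-(2 + ε₀)) *
      ⨆ t : Set.Icc (-(N : ℝ)) (N : ℝ), |harauxSouplet t - harauxSoupletPartial k t| with hS
  have key : ∀ k, ∀ N : Set.Ici (1 : ℝ),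
      (N : ℝ) ^ (-(2 + ε₀)) *
        (⨆ t : Set.Icc (-(N : ℝ)) (N : ℝ), |harauxSouplet t - harauxSoupletPartial k t|)
        ≤ T k ∧
      0 ≤ (N : ℝ) ^ (-(2 + ε₀)) *
        ⨆ t : Set.Icc (-(N : ℝ)) (N : ℝ), |harauxSouplet t - harauxSoupletPartial k t| := by
    intro k N
    have hN1 : (1 : ℝ) ≤ (N : ℝ) := N.2
    have hN0 : (0 : ℝ) < (N : ℝ) := lt_of_lt_of_le one_pos hN1
    haveI : Nonempty (Set.Icc (-(N : ℝ)) (N : ℝ)) :=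
      (Set.nonempty_Icc.mpr (by linarith)).to_subtype
    have hbound : ∀ t : Set.Icc (-(N : ℝ)) (N : ℝ),
        |harauxSouplet t - harauxSoupletPartial k t| ≤ (N : ℝ) ^ 2 * T k := by
      intro t
      rw [abs_of_nonneg (hs_tail_nonneg t k)]
      refine (hs_tail_le t k).trans ?_
      exact mul_le_mul_of_nonneg_right (sq_le_sq' t.2.1 t.2.2) (hTnn k)
    have hbdd : BddAbove (Set.range fun t : Set.Icc (-(N : ℝ)) (N : ℝ) =>
        |harauxSouplet t - harauxSoupletPartial k t|) := by
      refine ⟨(N : ℝ) ^ 2 * T k, ?_⟩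
      rintro x ⟨t, rfl⟩
      exact hbound t
    have hsup_le : (⨆ t : Set.Icc (-(N : ℝ)) (N : ℝ),
        |harauxSouplet t - harauxSoupletPartial k t|) ≤ (N : ℝ) ^ 2 * T k :=
      ciSup_le hbound
    have hsup_nn : 0 ≤ ⨆ t : Set.Icc (-(N : ℝ)) (N : ℝ),
        |harauxSouplet t - harauxSoupletPartial k t| := by
      obtain ⟨t⟩ := (inferInstance : Nonempty (Set.Icc (-(N : ℝ)) (N : ℝ)))
      exact (abs_nonneg _).trans (le_ciSup hbdd t)
    have hrw : (N : ℝ) ^ (-(2 + ε₀)) * ((N : ℝ) ^ 2 * T k) ≤ T k := by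
      have h1 : (N : ℝ) ^ (-(2 + ε₀)) * (N : ℝ) ^ (2 : ℕ) = (N : ℝ) ^ (-ε₀) := by
        rw [← Real.rpow_natCast (N : ℝ) 2, ← Real.rpow_add hN0]
        norm_num
      calc (N : ℝ) ^ (-(2 + ε₀)) * ((N : ℝ) ^ 2 * T k)
          = ((N : ℝ) ^ (-(2 + ε₀)) * (N : ℝ) ^ (2 : ℕ)) * T k := by ring
        _ = (N : ℝ) ^ (-ε₀) * T k := by rw [h1]
        _ ≤ 1 * T k := mul_le_mul_of_nonneg_right
            (Real.rpow_le_one_of_one_le_of_nonpos hN1 (by linarith)) (hTnn k)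
        _ = T k := one_mul _
    constructor
    · exact le_trans (mul_le_mul_of_nonneg_left hsup_le (Real.rpow_nonneg hN0.le _)) hrw
    · exact mul_nonneg (Real.rpow_nonneg hN0.le _) hsup_nn
  have hSle : ∀ k, S k ≤ T k := fun k => ciSup_le fun N => (key k N).1
  have hSnn : ∀ k, 0 ≤ S k := by
    intro k
    have hbdd : BddAbove (Set.range fun N : Set.Ici (1 : ℝ) =>
        (N : ℝ) ^ (-(2 + ε₀)) *
          ⨆ t : Set.Icc (-(N : ℝ)) (N : ℝ), |harauxSouplet t - harauxSoupletPartial k t|) := by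
      refine ⟨T k, ?_⟩
      rintro x ⟨N, rfl⟩
      exact (key k N).1
    exact (key k ⟨1, Set.self_mem_Ici⟩).2.trans (le_ciSup hbdd _)
  exact squeeze_zero hSnn hSle hs_coef_tendsto
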